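/- Let $H$ be a self-adjoint operator, $E \in \mathbb{R}$ with $E \notin \overline{\sigma_p(H)}$, let $C > 0$, and let $\tilde K$ be a compact self-adjoint operator. Suppose that for some $\delta > 0$ the Mourre-type inequality $P_{\delta}\, B\, P_{\delta} \ge C P_{\delta} + \tilde K$ holds, where $P_{\delta} := \mathbb{P}_{(E - \delta/2, E + \delta/2)}(H)$ and $B$ is a symmetric quadratic form bounded relative to the given setting. Then for all sufficiently small $\delta' \in (0, \delta)$, $P_{\delta'}\, B\, P_{\delta'} \ge \frac{C}{2} P_{\delta'}$. -/

import Mathlib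

set_option linter.unusedSectionVars false
set_option maxHeartbeats 1000000

open ContinuousLinearMap
open scoped InnerProductSpace



open Set

variable {H : Type*} [NormedAddCommGroup H] [InnerProductSpace ℂ H] [CompleteSpace H]

/-- `P` is the spectral projection `𝟙_{(a,b)}(T)` of the bounded self-adjoint
operator `T`: an orthogonal projection commuting with `T` on whose range
`a‖x‖² < Re⟪Tx,x⟫ < b‖x‖²` holds for nonzero `x`, and which is maximal with
this property. -/
def IsOpenIntervalSpectralProj (T P : H →L[ℂ] H) (a b : ℝ) : Prop :=
  IsIdempotentElem P ∧ IsSelfAdjoint P ∧ T ∘L P = P ∘L T ∧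
    (∀ x ∈ LinearMap.range (P : H →ₗ[ℂ] H), x ≠ 0 →
      a * ‖x‖ ^ 2 < T.reApplyInnerSelf x ∧ T.reApplyInnerSelf x < b * ‖x‖ ^ 2) ∧
    (∀ Q : H →L[ℂ] H, IsIdempotentElem Q → IsSelfAdjoint Q → T ∘L Q = Q ∘L T →
      (∀ x ∈ LinearMap.range (Q : H →ₗ[ℂ] H), x ≠ 0 →
        a * ‖x‖ ^ 2 < T.reApplyInnerSelf x ∧ T.reApplyInnerSelf x < b * ‖x‖ ^ 2) →
      LinearMap.range (Q : H →ₗ[ℂ] H) ≤ LinearMap.range (P : H →ₗ[ℂ] H))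



lemma my_proj_fix {P : H →L[ℂ] H} (hP : IsIdempotentElem P) {x : H}
    (hx : x ∈ LinearMap.range (P : H →ₗ[ℂ] H)) : P x = x := by
  obtain ⟨y, rfl⟩ := hx
  have := congrArg (fun A : H →L[ℂ] H => A y) hP
  simpa [ContinuousLinearMap.mul_apply] using this

lemma my_proj_re_inner {P : H →L[ℂ] H} (hP1 : IsIdempotentElem P)
    (hP2 : IsSelfAdjoint P) (x : H) :
    Complex.re ⟪P x, x⟫_ℂ = ‖P x‖ ^ 2 := by
  have hsym := hP2.isSymmetric
  have h1 : ⟪P x, x⟫_ℂ = ⟪P x, P x⟫_ℂ := by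
    conv_lhs => rw [show P x = P (P x) from (my_proj_fix hP1 ⟨x, rfl⟩).symm]
    exact hsym (P x) x
  rw [h1]
  exact @inner_self_eq_norm_sq ℂ H _ _ _ (P x)

lemma my_proj_norm_le {P : H →L[ℂ] H} (hP1 : IsIdempotentElem P)
    (hP2 : IsSelfAdjoint P) (x : H) : ‖P x‖ ≤ ‖x‖ := by
  rcases eq_or_lt_of_le (norm_nonneg (P x)) with h0 | h0
  · rw [← h0]; exact norm_nonneg x
  have h1 : ‖P x‖ ^ 2 = Complex.re ⟪P x, x⟫_ℂ := (my_proj_re_inner hP1 hP2 x).symm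
  have h2 : Complex.re ⟪P x, x⟫_ℂ ≤ ‖P x‖ * ‖x‖ := by
    calc Complex.re ⟪P x, x⟫_ℂ ≤ ‖⟪P x, x⟫_ℂ‖ := Complex.re_le_norm _
    _ ≤ ‖P x‖ * ‖x‖ := norm_inner_le_norm _ _
  have := h1.symm ▸ h2
  nlinarith

lemma my_comp_eq_of_range_le {P Q : H →L[ℂ] H} (hP1 : IsIdempotentElem P)
    (hP2 : IsSelfAdjoint P) (hQ2 : IsSelfAdjoint Q)
    (hle : LinearMap.range (Q : H →ₗ[ℂ] H) ≤ LinearMap.range (P : H →ₗ[ℂ] H)) :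
    P ∘L Q = Q ∧ Q ∘L P = Q := by
  have h1 : P ∘L Q = Q := by
    ext x
    exact my_proj_fix hP1 (hle ⟨x, rfl⟩)
  refine ⟨h1, ?_⟩
  have h2 : Q ∘L P = ContinuousLinearMap.adjoint (P ∘L Q) := by
    rw [ContinuousLinearMap.adjoint_comp, hP2.adjoint_eq, hQ2.adjoint_eq]
  rw [h2, h1, hQ2.adjoint_eq]

lemma my_symm_norm_bound {S : H →L[ℂ] H} (hS : (S : H →ₗ[ℂ] H).IsSymmetric)
    (M : Submodule ℂ H) (hinv : ∀ z ∈ M, S z ∈ M) {c : ℝ} (hc : 0 ≤ c)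
    (hb : ∀ z ∈ M, |Complex.re ⟪S z, z⟫_ℂ| ≤ c * ‖z‖ ^ 2)
    {y : H} (hy : y ∈ M) : ‖S y‖ ≤ c * ‖y‖ := by
  rcases eq_or_ne (S y) 0 with h0 | h0
  · rw [h0, norm_zero]; positivity
  rcases eq_or_ne y 0 with rfl | hy0
  · simp at h0
  set r : ℝ := ‖y‖ / ‖S y‖ with hr
  have hSy : (0:ℝ) < ‖S y‖ := norm_pos_iff.mpr h0
  have hyn : (0:ℝ) < ‖y‖ := norm_pos_iff.mpr hy0
  have hrpos : 0 < r := div_pos hyn hSy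
  set v : H := ((r : ℂ)) • S y with hv
  have hvM : v ∈ M := M.smul_mem _ (hinv y hy)
  have hvnorm : ‖v‖ = ‖y‖ := by
    rw [hv, norm_smul]
    simp only [Complex.norm_real, Real.norm_eq_abs, abs_of_pos hrpos, hr]
    field_simp
    rw [abs_of_pos (div_pos hyn hSy)]; field_simp
  have hq1 := hb (y + v) (M.add_mem hy hvM)
  have hq2 := hb (y - v) (M.sub_mem hy hvM)
  have hpar : ‖y + v‖ ^ 2 + ‖y - v‖ ^ 2 = 4 * ‖y‖ ^ 2 := by
    have h := parallelogram_law_with_norm ℂ y v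
    nlinarith [h, hvnorm]
  have hexp : Complex.re ⟪S (y + v), y + v⟫_ℂ - Complex.re ⟪S (y - v), y - v⟫_ℂ
      = 4 * Complex.re ⟪S y, v⟫_ℂ := by
    have hsv : Complex.re ⟪S v, y⟫_ℂ = Complex.re ⟪S y, v⟫_ℂ := by
      rw [hS.apply_clm v y]
      exact inner_re_symm (𝕜 := ℂ) v (S y)
    simp only [map_add, map_sub, inner_add_left, inner_add_right, inner_sub_left,
      inner_sub_right, Complex.add_re, Complex.sub_re]
    linarith
  have hrev : Complex.re ⟪S y, v⟫_ℂ = r * ‖S y‖ ^ 2 := by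
    rw [hv, inner_smul_right, Complex.re_ofReal_mul r _]
    congr 1
    exact @inner_self_eq_norm_sq ℂ H _ _ _ (S y)
  have h1 : Complex.re ⟪S (y + v), y + v⟫_ℂ ≤ c * ‖y + v‖ ^ 2 := (abs_le.mp hq1).2
  have h2 : -(c * ‖y - v‖ ^ 2) ≤ Complex.re ⟪S (y - v), y - v⟫_ℂ := (abs_le.mp hq2).1
  have h4 : c * ‖y + v‖ ^ 2 + c * ‖y - v‖ ^ 2 = 4 * c * ‖y‖ ^ 2 := by
    linear_combination c * hpar
  have hbound : 4 * (r * ‖S y‖ ^ 2) ≤ 4 * c * ‖y‖ ^ 2 := by linarith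
  have hrSy : r * ‖S y‖ ^ 2 = ‖y‖ * ‖S y‖ := by
    rw [hr]; field_simp
  rw [hrSy] at hbound
  refine le_of_mul_le_mul_left ?_ hyn
  nlinarith [hbound]

lemma my_real_smul (r : ℝ) (x : H) : r • x = ((r : ℂ)) • x := by
  rw [← algebraMap_smul ℂ r x, Complex.coe_algebraMap]

lemma my_inner_real_smul_left (r : ℝ) (x y : H) :
    Complex.re ⟪r • x, y⟫_ℂ = r * Complex.re ⟪x, y⟫_ℂ := by
  rw [my_real_smul, inner_smul_left, Complex.conj_ofReal, Complex.re_ofReal_mul]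

/-- Corollary 3.1 (ii): if `E` is not in the closure of the point spectrum of
the self-adjoint operator `T`, `P d = 𝟙_{(E-d/2,E+d/2)}(T)`, and the Mourre
estimate `P δ B P δ ≥ C P δ + K` holds with `C > 0` and `K` compact
self-adjoint, then for all sufficiently small `d ∈ (0, δ)` one has
`P d B P d ≥ (C/2) P d`. -/
theorem mourre_estimate_without_compact_error (T B K : H →L[ℂ] H)
    (hT : IsSelfAdjoint T) (hB : IsSelfAdjoint B)
    (hK : IsSelfAdjoint K) (hKc : IsCompactOperator ⇑K)
    (E C : ℝ) (hC : 0 < C)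
    (hE : E ∉ closure {μ : ℝ | ∃ x : H, x ≠ 0 ∧ T x = (μ : ℂ) • x})
    (δ : ℝ) (hδ : 0 < δ) (P : ℝ → H →L[ℂ] H)
    (hP : ∀ d ∈ Set.Ioc (0:ℝ) δ,
      IsOpenIntervalSpectralProj T (P d) (E - d / 2) (E + d / 2))
    (hMourre : ((P δ ∘L B ∘L P δ) - (C • P δ + K)).IsPositive) :
    ∃ δ₀ ∈ Set.Ioc (0:ℝ) δ, ∀ d ∈ Set.Ioc (0:ℝ) δ₀,
      ((P d ∘L B ∘L P d) - (C / 2) • P d).IsPositive := by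
  classical
  -- Step 1: nesting of ranges
  have hrange : ∀ d ∈ Set.Ioc (0:ℝ) δ, ∀ d' ∈ Set.Ioc (0:ℝ) δ, d ≤ d' →
      LinearMap.range (P d : H →ₗ[ℂ] H) ≤ LinearMap.range (P d' : H →ₗ[ℂ] H) := by
    intro d hd d' hd' hdd'
    obtain ⟨hQ1, hQ2, hQ3, hQ4, _⟩ := hP d hd
    obtain ⟨_, _, _, _, hmax⟩ := hP d' hd'
    refine hmax (P d) hQ1 hQ2 hQ3 ?_
    intro x hx hx0
    obtain ⟨h1, h2⟩ := hQ4 x hx hx0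
    have hx2 : (0:ℝ) ≤ ‖x‖ ^ 2 := by positivity
    refine ⟨lt_of_le_of_lt ?_ h1, lt_of_lt_of_le h2 ?_⟩ <;> nlinarith
  have hPP : ∀ d ∈ Set.Ioc (0:ℝ) δ, ∀ d' ∈ Set.Ioc (0:ℝ) δ, d ≤ d' →
      P d' ∘L P d = P d ∧ P d ∘L P d' = P d := fun d hd d' hd' h =>
    my_comp_eq_of_range_le (hP d' hd').1 (hP d' hd').2.1 (hP d hd).2.1
      (hrange d hd d' hd' h)
  -- Step 2: intersection of ranges is trivial
  have heig : ∀ y : H, (∀ d ∈ Set.Ioc (0:ℝ) δ, P d y = y) → y = 0 := by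
    intro y hy
    by_contra hy0
    have hyn : (0:ℝ) < ‖y‖ := norm_pos_iff.mpr hy0
    set S : H →L[ℂ] H := T - (E:ℂ) • 1 with hSdef
    have hSapp : ∀ z : H, S z = T z - (E:ℂ) • z := by
      intro z
      simp [hSdef, ContinuousLinearMap.sub_apply, ContinuousLinearMap.smul_apply,
        ContinuousLinearMap.one_apply]
    have hSsym : (S : H →ₗ[ℂ] H).IsSymmetric := by
      intro u v
      have hTs := hT.isSymmetric
      show ⟪S u, v⟫_ℂ = ⟪u, S v⟫_ℂ
      rw [hSapp, hSapp, inner_sub_left, inner_sub_right, inner_smul_left,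
        inner_smul_right, Complex.conj_ofReal, hTs.apply_clm]
    have hbound : ∀ d ∈ Set.Ioc (0:ℝ) δ, ‖S y‖ ≤ (d/2) * ‖y‖ := by
      intro d hd
      obtain ⟨h1, h2, h3, h4, _⟩ := hP d hd
      have hinv : ∀ z ∈ LinearMap.range (P d : H →ₗ[ℂ] H), S z ∈ LinearMap.range (P d : H →ₗ[ℂ] H) := by
        intro z hz
        have hz' : P d z = z := my_proj_fix h1 hz
        have hc : T (P d z) = P d (T z) := by
          have := congrArg (fun A : H →L[ℂ] H => A z) h3
          simpa using this
        refine ⟨S z, ?_⟩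
        show P d (S z) = S z
        rw [hSapp, map_sub, map_smul, hz', ← hc, hz', ← hSapp]
      have hb : ∀ z ∈ LinearMap.range (P d : H →ₗ[ℂ] H), |Complex.re ⟪S z, z⟫_ℂ| ≤ (d/2) * ‖z‖^2 := by
        intro z hz
        rcases eq_or_ne z 0 with rfl | hz0
        · simp
        obtain ⟨g1, g2⟩ := h4 z hz hz0
        have hrsz : Complex.re ⟪S z, z⟫_ℂ = T.reApplyInnerSelf z - E * ‖z‖^2 := by
          rw [hSapp, inner_sub_left, Complex.sub_re]
          congr 1
          rw [inner_smul_left, Complex.conj_ofReal, Complex.re_ofReal_mul]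
          congr 1
          exact @inner_self_eq_norm_sq ℂ H _ _ _ z
        rw [hrsz, abs_le]
        constructor <;> nlinarith
      have := my_symm_norm_bound hSsym (LinearMap.range (P d : H →ₗ[ℂ] H)) hinv
        (by linarith [hd.1] : (0:ℝ) ≤ d/2) hb ⟨y, hy d hd⟩
      exact this
    have hS0 : S y = 0 := by
      by_contra hS0
      have hSn : 0 < ‖S y‖ := norm_pos_iff.mpr hS0
      have hdm : min δ (‖S y‖ / ‖y‖) ∈ Set.Ioc (0:ℝ) δ :=
        ⟨lt_min hδ (div_pos hSn hyn), min_le_left _ _⟩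
      have h1 := hbound _ hdm
      have h2 : min δ (‖S y‖ / ‖y‖) ≤ ‖S y‖ / ‖y‖ := min_le_right _ _
      have h3 : min δ (‖S y‖ / ‖y‖) * ‖y‖ ≤ ‖S y‖ := by
        rw [← le_div_iff₀ hyn]
        exact h2
      nlinarith
    have hTy : T y = ((E:ℝ) : ℂ) • y := by
      have := hSapp y
      rw [hS0] at this
      have := sub_eq_zero.mp this.symm
      exact this
    exact hE (subset_closure ⟨y, hy0, hTy⟩)
  -- Step 3: strong convergence of P d to 0
  have hstrong : ∀ z : H, ∀ ε : ℝ, 0 < ε → ∃ d₀ ∈ Set.Ioc (0:ℝ) δ,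
      ∀ d ∈ Set.Ioc (0:ℝ) d₀, ‖P d z‖ ≤ ε := by
    intro z ε hε
    have hdmem : ∀ n : ℕ, δ / (n + 1) ∈ Set.Ioc (0:ℝ) δ := by
      intro n
      constructor
      · positivity
      · rw [div_le_iff₀ (by positivity)]
        nlinarith [(n.cast_nonneg : (0:ℝ) ≤ (n:ℝ)), hδ]
    have hdanti : ∀ m n : ℕ, m ≤ n → δ / (n + 1) ≤ δ / (m + 1) := by
      intro m n h
      apply div_le_div_of_nonneg_left hδ.le (by positivity)
      have : (m:ℝ) ≤ (n:ℝ) := Nat.cast_le.mpr h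
      linarith
    set y : ℕ → H := fun n => P (δ/(n+1)) z with hyd
    have hymem : ∀ n : ℕ, y n ∈ LinearMap.range (P (δ/(n+1)) : H →ₗ[ℂ] H) := by
      intro n
      simp only [hyd]
      exact ⟨z, rfl⟩
    have hfix : ∀ m n : ℕ, m ≤ n → P (δ/(m+1)) (y n) = y n := fun m n h =>
      my_proj_fix (hP _ (hdmem m)).1
        (hrange _ (hdmem n) _ (hdmem m) (hdanti m n h) (hymem n))
    have hkey : ∀ m n : ℕ, m ≤ n → ‖y n - y m‖^2 = ‖y m‖^2 - ‖y n‖^2 := by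
      intro m n h
      have hsym := (hP _ (hdmem m)).2.1.isSymmetric
      have h1 : ⟪y n, y m⟫_ℂ = ⟪y n, z⟫_ℂ := by
        have h2 := hsym.apply_clm (y n) z
        rw [hfix m n h] at h2
        simp only [hyd] at h2 ⊢
        exact h2.symm
      have h3 : Complex.re ⟪y n, y m⟫_ℂ = ‖y n‖^2 := by
        rw [h1]
        simp only [hyd]
        exact my_proj_re_inner (hP _ (hdmem n)).1 (hP _ (hdmem n)).2.1 z
      have h4 := @norm_sub_sq ℂ H _ _ _ (y n) (y m)
      simp only [RCLike.re_to_complex] at h4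
      rw [h4]
      rw [show Complex.re ⟪y n, y m⟫_ℂ = ‖y n‖^2 from h3]
      ring
    have hanti : Antitone (fun n => ‖y n‖^2) := by
      intro a b hab
      have := hkey a b hab
      show ‖y b‖ ^ 2 ≤ ‖y a‖ ^ 2
      nlinarith [sq_nonneg ‖y b - y a‖]
    have hbdd : BddBelow (Set.range fun n => ‖y n‖^2) := by
      refine ⟨0, ?_⟩
      rintro v ⟨n, rfl⟩
      positivity
    have hcg : CauchySeq (fun n => ‖y n‖^2) := (tendsto_atTop_ciInf hanti hbdd).cauchySeq
    have hcy : CauchySeq y := by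
      rw [Metric.cauchySeq_iff']
      intro ε' hε'
      obtain ⟨N, hN⟩ := Metric.cauchySeq_iff'.mp hcg (ε'^2) (by positivity)
      refine ⟨N, fun n hn => ?_⟩
      have h1 := hkey N n hn
      have h2 := hN n hn
      rw [Real.dist_eq] at h2
      rw [dist_eq_norm]
      have h5 := abs_lt.mp h2
      nlinarith [norm_nonneg (y n - y N), h1, h5.1, h5.2, hε']
    obtain ⟨w, hw⟩ := cauchySeq_tendsto_of_complete hcy
    have hwfix : ∀ d ∈ Set.Ioc (0:ℝ) δ, P d w = w := by
      intro d hd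
      obtain ⟨N, hN⟩ := exists_nat_gt (δ / d)
      have hdN : δ / (N + 1) ≤ d := by
        rw [div_le_iff₀ (by positivity)]
        have h6 : δ / d < (N:ℝ) + 1 := hN.trans_le (by linarith)
        rw [div_lt_iff₀ hd.1] at h6
        linarith
      have hPdyn : ∀ n : ℕ, N ≤ n → P d (y n) = y n := by
        intro n hn
        exact my_proj_fix (hP d hd).1
          (hrange _ (hdmem n) d hd (le_trans (hdanti N n hn) hdN) (hymem n))
      have ht1 : Filter.Tendsto (fun n => P d (y n)) Filter.atTop (nhds (P d w)) :=
        ((P d).continuous.tendsto w).comp hw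
      have ht2 : Filter.Tendsto (fun n => P d (y n)) Filter.atTop (nhds w) := by
        apply Filter.Tendsto.congr' ?_ hw
        filter_upwards [Filter.eventually_ge_atTop N] with n hn
        exact (hPdyn n hn).symm
      exact tendsto_nhds_unique ht1 ht2
    have hw0 : w = 0 := heig w hwfix
    have hnorm : Filter.Tendsto (fun n => ‖y n‖) Filter.atTop (nhds 0) := by
      have := hw.norm
      rwa [hw0, norm_zero] at this
    obtain ⟨N, hN⟩ := Metric.tendsto_atTop.mp hnorm ε hε
    have hyNε : ‖y N‖ ≤ ε := by
      have := hN N le_rfl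
      rw [Real.dist_eq, sub_zero, abs_of_nonneg (norm_nonneg _)] at this
      linarith
    refine ⟨δ/(N+1), hdmem N, ?_⟩
    intro d hd
    have hdδ2 : d ∈ Set.Ioc (0:ℝ) δ := ⟨hd.1, le_trans hd.2 (hdmem N).2⟩
    have hcomp := (hPP d hdδ2 _ (hdmem N) hd.2).2
    have hPz : P d z = P d (y N) := by
      conv_lhs => rw [← hcomp]
      simp only [ContinuousLinearMap.comp_apply, hyd]
    rw [hPz]
    calc ‖P d (y N)‖ ≤ ‖y N‖ := my_proj_norm_le (hP d hdδ2).1 (hP d hdδ2).2.1 _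
    _ ≤ ε := hyNε
  -- Step 4: compactness gives a uniform bound
  have hsmall : ∃ d₀ ∈ Set.Ioc (0:ℝ) δ, ∀ d ∈ Set.Ioc (0:ℝ) d₀,
      ∀ v : H, ‖v‖ ≤ 1 → ‖P d (K v)‖ ≤ C / 4 := by
    have hKc' : IsCompactOperator ⇑(K : H →ₗ[ℂ] H) := hKc
    have hSc : IsCompact (closure (⇑(K : H →ₗ[ℂ] H) '' Metric.closedBall 0 1)) :=
      hKc'.isCompact_closure_image_of_bounded Metric.isBounded_closedBall
    obtain ⟨t, htfin, htcov⟩ :=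
      (Metric.totallyBounded_iff.mp hSc.totallyBounded) (C/8) (by positivity)
    choose f hf1 hf2 using fun u : H => hstrong u (C/8) (by positivity)
    classical
    set s := htfin.toFinset with hsdef
    set F : Finset ℝ := insert δ (s.image f) with hF
    have hFne : F.Nonempty := ⟨δ, Finset.mem_insert_self _ _⟩
    set d₀ := F.min' hFne with hd₀def
    have hd₀pos : 0 < d₀ := by
      rw [hd₀def, Finset.lt_min'_iff]
      intro a ha
      rcases Finset.mem_insert.mp ha with h | h
      · rw [h]; exact hδ
      · obtain ⟨u, _, rfl⟩ := Finset.mem_image.mp h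
        exact (hf1 u).1
    have hd₀δ : d₀ ≤ δ := Finset.min'_le F δ (Finset.mem_insert_self _ _)
    refine ⟨d₀, ⟨hd₀pos, hd₀δ⟩, ?_⟩
    intro d hd v hv
    have hdδ3 : d ∈ Set.Ioc (0:ℝ) δ := ⟨hd.1, le_trans hd.2 hd₀δ⟩
    have hKv : K v ∈ closure (⇑(K : H →ₗ[ℂ] H) '' Metric.closedBall 0 1) :=
      subset_closure ⟨v, mem_closedBall_zero_iff.mpr hv, rfl⟩
    obtain ⟨u, hut, hball⟩ := Set.mem_iUnion₂.mp (htcov hKv)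
    have hdist : ‖K v - u‖ < C/8 := by
      rwa [Metric.mem_ball, dist_eq_norm] at hball
    have hdfu : d ∈ Set.Ioc (0:ℝ) (f u) := by
      refine ⟨hd.1, le_trans hd.2 ?_⟩
      rw [hd₀def]
      exact Finset.min'_le F (f u)
        (Finset.mem_insert_of_mem (Finset.mem_image_of_mem f (htfin.mem_toFinset.mpr hut)))
    have hPu := hf2 u d hdfu
    have hsplit : P d (K v) = P d (K v - u) + P d u := by
      rw [← map_add, sub_add_cancel]
    calc ‖P d (K v)‖ = ‖P d (K v - u) + P d u‖ := by rw [hsplit]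
    _ ≤ ‖P d (K v - u)‖ + ‖P d u‖ := norm_add_le _ _
    _ ≤ ‖K v - u‖ + (C/8) :=
        add_le_add (my_proj_norm_le (hP d hdδ3).1 (hP d hdδ3).2.1 _) hPu
    _ ≤ C/4 := by linarith
  -- Step 5: conclusion
  obtain ⟨d₀, hd₀, hd₀K⟩ := hsmall
  refine ⟨d₀, hd₀, ?_⟩
  intro d hd
  have hdδ : d ∈ Set.Ioc (0:ℝ) δ := ⟨hd.1, le_trans hd.2 hd₀.2⟩
  obtain ⟨hP1, hP2, hP3, hP4, _⟩ := hP d hdδ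
  have hsymd := hP2.isSymmetric
  constructor
  · -- self-adjointness via symmetry
    intro u v
    have hBs := hB.isSymmetric
    have eA : ⟪P d (B (P d u)), v⟫_ℂ = ⟪u, P d (B (P d v))⟫_ℂ := by
      rw [hsymd.apply_clm, hBs.apply_clm, hsymd.apply_clm]
    have eB : ⟪(C / 2 : ℝ) • P d u, v⟫_ℂ = ⟪u, (C / 2 : ℝ) • P d v⟫_ℂ := by
      rw [my_real_smul, my_real_smul, inner_smul_left, inner_smul_right,
        Complex.conj_ofReal, hsymd.apply_clm]
    simp only [ContinuousLinearMap.coe_coe, ContinuousLinearMap.sub_apply,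
      ContinuousLinearMap.comp_apply, ContinuousLinearMap.smul_apply]
    rw [inner_sub_left, inner_sub_right, eA, eB]
  · intro x
    set y : H := P d x with hy
    -- y is fixed by P δ
    have hyPδ : P δ y = y :=
      my_proj_fix (hP δ ⟨hδ, le_refl δ⟩).1
        (hrange d hdδ δ ⟨hδ, le_refl δ⟩ hdδ.2 ⟨x, rfl⟩)
    have hydd : P d y = y := my_proj_fix hP1 ⟨x, rfl⟩
    have hsymδ := (hP δ ⟨hδ, le_refl δ⟩).2.1.isSymmetric
    -- Mourre estimate applied to y
    have hM := hMourre.2 y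
    rw [ContinuousLinearMap.reApplyInnerSelf_apply] at hM
    have hMexp : Complex.re ⟪B y, y⟫_ℂ ≥ C * ‖y‖ ^ 2 + Complex.re ⟪K y, y⟫_ℂ := by
      have e1 : ((P δ ∘L B ∘L P δ) - (C • P δ + K)) y
          = P δ (B y) - ((C:ℝ) • y + K y) := by
        simp [ContinuousLinearMap.sub_apply, ContinuousLinearMap.comp_apply,
          ContinuousLinearMap.add_apply, ContinuousLinearMap.smul_apply, hyPδ]
      rw [e1] at hM
      have e2 : Complex.re ⟪P δ (B y), y⟫_ℂ = Complex.re ⟪B y, y⟫_ℂ := by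
        rw [hsymδ.apply_clm (B y) y, hyPδ]
      have e3 : Complex.re ⟪(C:ℝ) • y, y⟫_ℂ = C * ‖y‖ ^ 2 := by
        rw [my_inner_real_smul_left]
        congr 1
        exact @inner_self_eq_norm_sq ℂ H _ _ _ y
      simp only [inner_sub_left, inner_add_left, Complex.sub_re, Complex.add_re,
        RCLike.re_to_complex] at hM
      rw [e2, e3] at hM
      linarith [hM]
    -- bound on the compact term
    have hKb : Complex.re ⟪K y, y⟫_ℂ ≥ -(C / 4) * ‖y‖ ^ 2 := by
      rcases eq_or_ne y 0 with h0 | h0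
      · simp [h0]
      have hyn : (0:ℝ) < ‖y‖ := norm_pos_iff.mpr h0
      set u : H := ‖y‖⁻¹ • y with hu
      have hun : ‖u‖ ≤ 1 := by
        rw [hu, norm_smul, Real.norm_eq_abs, abs_of_pos (inv_pos.mpr hyn),
          inv_mul_cancel₀ hyn.ne']
      have hKy : ‖y‖ • K u = K y := by
        rw [hu, ContinuousLinearMap.map_smul_of_tower, smul_smul,
          mul_inv_cancel₀ hyn.ne', one_smul]
      have h1 : Complex.re ⟪K y, y⟫_ℂ = Complex.re ⟪P d (K y), y⟫_ℂ := by
        rw [hsymd.apply_clm (K y) y, hydd]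
      have h2 : ‖P d (K y)‖ ≤ (C/4) * ‖y‖ := by
        have hb := hd₀K d hd u hun
        calc ‖P d (K y)‖ = ‖y‖ * ‖P d (K u)‖ := by
              rw [← hKy, ContinuousLinearMap.map_smul_of_tower, norm_smul,
                Real.norm_eq_abs, abs_of_pos hyn]
        _ ≤ ‖y‖ * (C/4) := mul_le_mul_of_nonneg_left hb hyn.le
        _ = (C/4) * ‖y‖ := mul_comm _ _
      have habs : |Complex.re ⟪P d (K y), y⟫_ℂ| ≤ ‖P d (K y)‖ * ‖y‖ := by
        calc |Complex.re ⟪P d (K y), y⟫_ℂ| ≤ ‖⟪P d (K y), y⟫_ℂ‖ :=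
              Complex.abs_re_le_norm _
        _ ≤ ‖P d (K y)‖ * ‖y‖ := norm_inner_le_norm _ _
      have h3 := (abs_le.mp habs).1
      rw [h1]
      nlinarith [h2, hyn.le]
    -- assemble
    rw [ContinuousLinearMap.reApplyInnerSelf_apply]
    have e4 : ((P d ∘L B ∘L P d) - (C / 2) • P d) x
        = P d (B y) - (C / 2 : ℝ) • y := by
      simp [ContinuousLinearMap.sub_apply, ContinuousLinearMap.comp_apply,
        ContinuousLinearMap.smul_apply, hy]
    rw [e4]
    have e5 : Complex.re ⟪P d (B y), x⟫_ℂ = Complex.re ⟪B y, y⟫_ℂ := by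
      rw [hsymd.apply_clm (B y) x, ← hy]
    have e6 : Complex.re ⟪(C / 2 : ℝ) • y, x⟫_ℂ = (C / 2) * ‖y‖ ^ 2 := by
      rw [my_inner_real_smul_left]
      congr 1
      rw [hy, ← my_proj_re_inner hP1 hP2 x]
    simp only [inner_sub_left, Complex.sub_re, RCLike.re_to_complex]
    rw [e5, e6]
    nlinarith [hMexp, hKb, sq_nonneg ‖y‖]
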